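/- Let β : [0,∞)×[0,∞) → [0,∞) be a function of class KL (i.e. β(0,t)=0, β(·,t) strictly increasing and unbounded for each t, β(r,·) strictly decreasing for each r, and β(r,t)→0 as t→∞ for each r), and suppose β(R,0) > R for all R > 0. Define a bi-infinite sequence (r_i)_{i∈ℤ} by r_0 = 1 and r_{i-1} = β(r_i, 0) for all i ∈ ℤ (each r_i for i>0 obtained by solving the equation, which is possible since β(·,0) is a strictly increasing unbounded bijection onto its range containing (0,∞)). Then (r_i) is strictly decreasing (i.e. r_{i+1} < r_i for all i), positive, r_i → 0 as i → +∞, and r_i → +∞ as i → -∞. -/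

import Mathlib

/-- A class-KL comparison function. -/
structure IsKL (β : ℝ → ℝ → ℝ) : Prop where
  cont : ContinuousOn (fun p : ℝ × ℝ => β p.1 p.2) (Set.Ici 0 ×ˢ Set.Ici 0)
  zero : ∀ t ≥ (0:ℝ), β 0 t = 0
  mono : ∀ t ≥ (0:ℝ), StrictMonoOn (fun r => β r t) (Set.Ici 0)
  unbdd : ∀ t ≥ (0:ℝ), ∀ M : ℝ, ∃ r ≥ (0:ℝ), M < β r t
  anti : ∀ r > (0:ℝ), StrictAntiOn (fun t => β r t) (Set.Ici 0)
  lim : ∀ r ≥ (0:ℝ), Filter.Tendsto (fun t => β r t) Filter.atTop (nhds 0)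

theorem stmt_0 (β : ℝ → ℝ → ℝ) (hβ : IsKL β)
    (hgt : ∀ R > (0:ℝ), R < β R 0)
    (r : ℤ → ℝ) (hr0 : r 0 = 1)
    (hrnn : ∀ i : ℤ, 0 ≤ r i)
    (hrec : ∀ i : ℤ, r (i - 1) = β (r i) 0) :
    (∀ i : ℤ, r (i + 1) < r i) ∧ (∀ i : ℤ, 0 < r i) ∧
      Filter.Tendsto r Filter.atTop (nhds 0) ∧
      Filter.Tendsto r Filter.atBot Filter.atTop := by
  -- positivity
  have hpos : ∀ i : ℤ, 0 < r i := by
    intro i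
    induction i using Int.induction_on with
    | zero => rw [hr0]; norm_num
    | succ n ih =>
      rcases lt_or_eq_of_le (hrnn (n + 1)) with h | h
      · exact h
      · exfalso
        have h1 : r ((n + 1 : ℤ) - 1) = β (r (n + 1)) 0 := hrec _
        rw [← h, hβ.zero 0 le_rfl] at h1
        simp only [add_sub_cancel_right] at h1
        exact absurd h1 (ne_of_gt ih)
    | pred n ih =>
      have h1 : r ((-n : ℤ) - 1) = β (r (-n)) 0 := hrec _
      have := hgt (r (-n)) ih
      rw [← h1] at this
      linarith
  -- strict decrease
  have hdec : ∀ i : ℤ, r (i + 1) < r i := by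
    intro i
    have h1 : r ((i + 1 : ℤ) - 1) = β (r (i + 1)) 0 := hrec _
    simp only [add_sub_cancel_right] at h1
    rw [h1]
    exact hgt _ (hpos _)
  have hanti : StrictAnti r := strictAnti_int_of_succ_lt hdec
  -- helper: if r tends to L ≥ 0 along a filter l (nontrivial), and l maps i-1 stuff...
  -- limit at +∞
  have hcont : ∀ L : ℝ, 0 ≤ L → ∀ {l : Filter ℤ} [l.NeBot],
      Filter.Tendsto r l (nhds L) → Filter.Tendsto (fun i => i - 1 : ℤ → ℤ) l l → L = β L 0 := by
    intro L hL l _ hlim hshift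
    have hc : ContinuousWithinAt (fun p : ℝ × ℝ => β p.1 p.2)
        (Set.Ici 0 ×ˢ Set.Ici 0) (L, 0) :=
      hβ.cont (L, 0) ⟨hL, Set.mem_Ici.mpr le_rfl⟩
    have hpair : Filter.Tendsto (fun i => ((r i, 0) : ℝ × ℝ)) l
        (nhdsWithin (L, 0) (Set.Ici 0 ×ˢ Set.Ici 0)) := by
      apply tendsto_nhdsWithin_of_tendsto_nhds_of_eventually_within
      · exact hlim.prodMk_nhds tendsto_const_nhds
      · exact Filter.Eventually.of_forall fun i => ⟨hrnn i, Set.mem_Ici.mpr le_rfl⟩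
    have h2 : Filter.Tendsto (fun i => β (r i) 0) l (nhds (β L 0)) := hc.tendsto.comp hpair
    have h3 : Filter.Tendsto (fun i => r (i - 1)) l (nhds (β L 0)) := by
      simpa only [hrec] using h2
    have h4 : Filter.Tendsto (fun i => r (i - 1)) l (nhds L) := hlim.comp hshift
    exact tendsto_nhds_unique h4 h3
  have hshiftTop : Filter.Tendsto (fun i => i - 1 : ℤ → ℤ) Filter.atTop Filter.atTop := by
    simpa [sub_eq_add_neg] using Filter.tendsto_atTop_add_const_right Filter.atTop (-1) Filter.tendsto_id
  have hshiftBot : Filter.Tendsto (fun i => i - 1 : ℤ → ℤ) Filter.atBot Filter.atBot := by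
    simpa [sub_eq_add_neg] using Filter.tendsto_atBot_add_const_right Filter.atBot (-1) Filter.tendsto_id
  have htop : Filter.Tendsto r Filter.atTop (nhds 0) := by
    have hbdd : BddBelow (Set.range r) := ⟨0, by rintro x ⟨i, rfl⟩; exact hrnn i⟩
    have hlim := tendsto_atTop_ciInf hanti.antitone hbdd
    have hL0 : (0:ℝ) ≤ ⨅ i, r i := le_ciInf fun i => hrnn i
    have hLfix := hcont _ hL0 hlim hshiftTop
    have : ⨅ i, r i = 0 := by
      by_contra h
      have hLpos : 0 < ⨅ i, r i := lt_of_le_of_ne hL0 (Ne.symm h)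
      have := hgt _ hLpos
      rw [← hLfix] at this
      exact lt_irrefl _ this
    rwa [this] at hlim
  have hbot : Filter.Tendsto r Filter.atBot Filter.atTop := by
    apply Filter.tendsto_atBot_atTop_of_antitone hanti.antitone
    by_contra h
    push_neg at h
    obtain ⟨b, hb⟩ := h
    have hbdd : BddAbove (Set.range r) := ⟨b, by rintro x ⟨i, rfl⟩; exact (hb i).le⟩
    have hlim := tendsto_atBot_ciSup hanti.antitone hbdd
    have hL0 : (0:ℝ) ≤ ⨆ i, r i := le_trans (hrnn 0) (le_ciSup hbdd 0)
    have hLpos : (0:ℝ) < ⨆ i, r i := lt_of_lt_of_le (by rw [hr0]; norm_num : (0:ℝ) < r 0) (le_ciSup hbdd 0)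
    have hLfix := hcont _ hL0 hlim hshiftBot
    have := hgt _ hLpos
    rw [← hLfix] at this
    exact lt_irrefl _ this
  exact ⟨hdec, hpos, htop, hbot⟩
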